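/- If S is a finite commutative unital semigroup that is unit-stabilized (i.e., (S, ∅) is a unit-stabilized pair), then D(S) = D(U(S)). -/

import Mathlib

/-- A list (sequence) in a commutative monoid is reducible if a proper
subsequence has the same product. -/
def Reducible {M : Type*} [CommMonoid M] (A : List M) : Prop :=
  ∃ B : List M, List.Sublist B A ∧ B.length < A.length ∧ B.prod = A.prod

/-- The Davenport constant: the least positive `n` such that every sequence of
length `n` is reducible (`⊤` if none exists). -/
noncomputable def davenport (M : Type*) [CommMonoid M] : ℕ∞ :=
  sInf {k : ℕ∞ | ∃ n : ℕ, k = n ∧ 0 < n ∧ ∀ A : List M, A.length = n → Reducible A}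

/-- An ideal of a commutative monoid. -/
def IsMulIdeal {M : Type*} [CommMonoid M] (T : Set M) : Prop :=
  ∀ s t : M, t ∈ T → s * t ∈ T

/-- The relative Davenport constant `D(S, T)`: the least positive `n` such
that every sequence of length `n` with product in `T` is reducible. -/
noncomputable def davenportRel (M : Type*) [CommMonoid M] (T : Set M) : ℕ∞ :=
  sInf {k : ℕ∞ | ∃ n : ℕ, k = n ∧ 0 < n ∧
    ∀ A : List M, A.length = n → A.prod ∈ T → Reducible A}

/-- `(S, T)` is a unit-stabilized pair. -/
def UnitStabilizedPair (M : Type*) [CommMonoid M] (T : Set M) : Prop :=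
  ∀ a b : M, a * b ∉ T →
    {u : Mˣ | (u : M) * a = a} = {u : Mˣ | (u : M) * (a * b) = a * b} →
    ∃ u : Mˣ, a * b = a * u

section Aux

variable {S : Type*} [CommMonoid S]

/-- If every element of a list of units stabilizes `p`, then so does the product. -/
lemma prodStab {p : S} : ∀ {vs : List Sˣ}, (∀ v ∈ vs, (v : S) * p = p) →
    ((vs.prod : Sˣ) : S) * p = p
  | [], _ => by simp
  | v :: vs, h => by
    have h1 : (v : S) * p = p := h v List.mem_cons_self
    have h2 : ((vs.prod : Sˣ) : S) * p = p :=
      prodStab (fun w hw => h w (List.mem_cons_of_mem _ hw))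
    simp only [List.prod_cons, Units.val_mul, mul_assoc, h2, h1]

lemma invStab {p : S} {u : Sˣ} (h : (u : S) * p = p) : ((u⁻¹ : Sˣ) : S) * p = p := by
  conv_lhs => rw [← h]
  rw [← mul_assoc, ← Units.val_mul, inv_mul_cancel, Units.val_one, one_mul]

/-- A chain of units `vs` along the list `B`: the `j`-th unit stabilizes the
product of the first `j+1` elements but not that of the first `j` elements. -/
inductive StabChain : List S → List Sˣ → Prop
  | nil : StabChain [] []
  | snoc {B : List S} {vs : List Sˣ} (b : S) (v : Sˣ) :
      StabChain B vs → ((v : S) * (B.prod * b) = B.prod * b) →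
      ¬ ((v : S) * B.prod = B.prod) → StabChain (B ++ [b]) (vs ++ [v])

lemma StabChain.length_eq {B : List S} {vs : List Sˣ} (h : StabChain B vs) :
    vs.length = B.length := by
  induction h with
  | nil => rfl
  | snoc b v h hst hnst ih => simp [ih]

lemma StabChain.mem_stab {B : List S} {vs : List Sˣ} (h : StabChain B vs) :
    ∀ v ∈ vs, (v : S) * B.prod = B.prod := by
  induction h with
  | nil => simp
  | snoc b v h hst hnst ih =>
    intro w hw
    rcases List.mem_append.mp hw with hw | hw
    · have := ih w hw
      simp only [List.prod_append, List.prod_cons, List.prod_nil, mul_one]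
      rw [← mul_assoc, this]
    · simp only [List.mem_singleton] at hw
      subst hw
      simpa using hst

/-- A sublist of a stab-chain's unit list with the same product must be the whole list. -/
lemma StabChain.eq_of_prod_eq {B : List S} {vs : List Sˣ} (h : StabChain B vs) :
    ∀ {vs' : List Sˣ}, vs'.Sublist vs → vs'.prod = vs.prod → vs' = vs := by
  induction h with
  | nil => intro vs' hs _; exact List.sublist_nil.mp hs
  | snoc b v h hst hnst ih =>
    rename_i B vs
    intro vs' hs hp
    obtain ⟨l₁, l₂, rfl, h₁, h₂⟩ := List.sublist_append_iff.mp hs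
    rcases List.sublist_singleton.mp h₂ with rfl | rfl
    · -- the last unit was dropped: contradiction
      exfalso
      simp only [List.append_nil, List.prod_append, List.prod_cons, List.prod_nil,
        mul_one] at hp
      have hl₁ : ((l₁.prod : Sˣ) : S) * B.prod = B.prod :=
        prodStab (fun w hw => h.mem_stab w (h₁.subset hw))
      have hvs : ((vs.prod : Sˣ) : S) * B.prod = B.prod :=
        prodStab (fun w hw => h.mem_stab w hw)
      have hv : v = vs.prod⁻¹ * l₁.prod := by
        rw [hp, ← mul_assoc, inv_mul_cancel, one_mul]
      apply hnst
      rw [hv, Units.val_mul, mul_assoc, hl₁, invStab hvs]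
    · -- the last unit was kept
      simp only [List.prod_append, List.prod_cons, List.prod_nil, mul_one] at hp
      have := mul_right_cancel hp
      rw [ih h₁ this]

/-- The key greedy decomposition of a list over `S`. -/
lemma key_decomp (hus : UnitStabilizedPair S (∅ : Set S)) (A : List S) :
    ∃ (B : List S) (us vs : List Sˣ),
      B.Sublist A ∧ StabChain B vs ∧
      B.length + us.length = A.length ∧
      A.prod = B.prod * ((us.prod : Sˣ) : S) ∧
      (∀ R : List Sˣ, R.Sublist us → ∃ C : List S, C.Sublist A ∧
        C.length = B.length + R.length ∧ C.prod = B.prod * ((R.prod : Sˣ) : S)) := by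
  induction A using List.reverseRecOn with
  | nil =>
    refine ⟨[], [], [], List.Sublist.refl _, StabChain.nil, rfl, by simp, ?_⟩
    intro R hR
    rw [List.sublist_nil.mp hR]
    exact ⟨[], List.Sublist.refl _, rfl, by simp⟩
  | append_singleton A a ih =>
    obtain ⟨B, us, vs, hBA, hchain, hlen, hprod, hR⟩ := ih
    by_cases heq : {u : Sˣ | (u : S) * B.prod = B.prod}
        = {u : Sˣ | (u : S) * (B.prod * a) = B.prod * a}
    · -- drop `a`, recording a unit
      obtain ⟨u, hu⟩ := hus B.prod a (Set.notMem_empty _) heq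
      refine ⟨B, us ++ [u], vs, hBA.trans (List.sublist_append_left A [a]), hchain,
        by simp; omega, ?_, ?_⟩
      · simp only [List.prod_append, List.prod_cons, List.prod_nil, mul_one,
          Units.val_mul, hprod]
        calc B.prod * ((us.prod : Sˣ) : S) * a = B.prod * a * ((us.prod : Sˣ) : S) := by
              ac_rfl
          _ = B.prod * (u : S) * ((us.prod : Sˣ) : S) := by rw [hu]
          _ = B.prod * (((us.prod : Sˣ) : S) * (u : S)) := by ac_rfl
      · intro R hRsub
        obtain ⟨R₁, R₂, rfl, hR₁, hR₂⟩ := List.sublist_append_iff.mp hRsub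
        rcases List.sublist_singleton.mp hR₂ with rfl | rfl
        · obtain ⟨C, hC, hClen, hCprod⟩ := hR R₁ hR₁
          exact ⟨C, hC.trans (List.sublist_append_left A [a]),
            by simpa using hClen, by simpa using hCprod⟩
        · obtain ⟨C, hC, hClen, hCprod⟩ := hR R₁ hR₁
          refine ⟨C ++ [a], hC.append (List.Sublist.refl [a]), by simp [hClen]; omega, ?_⟩
          simp only [List.prod_append, List.prod_cons, List.prod_nil, mul_one,
            Units.val_mul, hCprod]
          calc B.prod * ((R₁.prod : Sˣ) : S) * a = B.prod * a * ((R₁.prod : Sˣ) : S) := by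
                ac_rfl
            _ = B.prod * (u : S) * ((R₁.prod : Sˣ) : S) := by rw [hu]
            _ = B.prod * (((R₁.prod : Sˣ) : S) * (u : S)) := by ac_rfl
    · -- keep `a`
      have hsub : {u : Sˣ | (u : S) * B.prod = B.prod}
          ⊆ {u : Sˣ | (u : S) * (B.prod * a) = B.prod * a} := by
        intro u hu
        simp only [Set.mem_setOf_eq] at hu ⊢
        rw [← mul_assoc, hu]
      obtain ⟨v, hv2, hv1⟩ := Set.not_subset.mp
        (fun hsub' => heq (Set.Subset.antisymm hsub hsub'))
      refine ⟨B ++ [a], us, vs ++ [v], hBA.append (List.Sublist.refl [a]),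
        StabChain.snoc a v hchain hv2 hv1, by simp; omega, ?_, ?_⟩
      · simp only [List.prod_append, List.prod_cons, List.prod_nil, mul_one, hprod]
        ac_rfl
      · intro R hRsub
        obtain ⟨C, hC, hClen, hCprod⟩ := hR R hRsub
        refine ⟨C ++ [a], hC.append (List.Sublist.refl [a]), by simp [hClen]; omega, ?_⟩
        simp only [List.prod_append, List.prod_cons, List.prod_nil, mul_one, hCprod]
        ac_rfl

/-- Hard direction: reducibility transfers from `Sˣ` to `S`. -/
lemma all_reducible (hus : UnitStabilizedPair S (∅ : Set S)) (n : ℕ)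
    (hU : ∀ L : List Sˣ, L.length = n → Reducible L)
    (A : List S) (hA : A.length = n) : Reducible A := by
  obtain ⟨B, us, vs, hBA, hchain, hlen, hprod, hR⟩ := key_decomp hus A
  have hvlen : vs.length = B.length := hchain.length_eq
  obtain ⟨L', hLsub, hLlt, hLprod⟩ := hU (us ++ vs) (by simp [hvlen]; omega)
  obtain ⟨us', vs', rfl, hus', hvs'⟩ := List.sublist_append_iff.mp hLsub
  -- products over B.prod
  have habs : ∀ ws : List Sˣ, ws.Sublist vs → ((ws.prod : Sˣ) : S) * B.prod = B.prod :=
    fun ws hws => prodStab (fun w hw => hchain.mem_stab w (hws.subset hw))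
  have key1 : B.prod * ((us'.prod : Sˣ) : S) = B.prod * ((us.prod : Sˣ) : S) := by
    have e1 : B.prod * ((us'.prod : Sˣ) : S)
        = B.prod * (((us' ++ vs').prod : Sˣ) : S) := by
      have hb := habs vs' hvs'
      conv_lhs => rw [← hb]
      simp only [List.prod_append, Units.val_mul]
      ac_rfl
    have e2 : B.prod * ((us.prod : Sˣ) : S)
        = B.prod * (((us ++ vs).prod : Sˣ) : S) := by
      have hb := habs vs (List.Sublist.refl vs)
      conv_lhs => rw [← hb]
      simp only [List.prod_append, Units.val_mul]
      ac_rfl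
    rw [e1, e2, hLprod]
  by_cases hl : us'.length < us.length
  · obtain ⟨C, hC, hClen, hCprod⟩ := hR us' hus'
    refine ⟨C, hC, by omega, ?_⟩
    rw [hCprod, key1, hprod]
  · have hul : us'.length = us.length :=
      le_antisymm hus'.length_le (not_lt.mp hl)
    have hueq : us' = us := hus'.eq_of_length hul
    subst hueq
    exfalso
    have hvp : vs'.prod = vs.prod := by
      have : us'.prod * vs'.prod = us'.prod * vs.prod := by
        simpa [List.prod_append] using hLprod
      exact mul_left_cancel this
    have : vs' = vs := hchain.eq_of_prod_eq hvs' hvp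
    subst this
    simp at hLlt

end Aux

theorem davenport_eq_units_of_unit_stabilized {S : Type*} [CommMonoid S] [Finite S]
    (hus : UnitStabilizedPair S (∅ : Set S)) :
    davenport S = davenport Sˣ := by
  unfold davenport
  congr 1
  ext k
  simp only [Set.mem_setOf_eq]
  constructor
  · rintro ⟨n, rfl, hn, hall⟩
    refine ⟨n, rfl, hn, ?_⟩
    intro L hL
    obtain ⟨B, hB, hBlen, hBprod⟩ := hall (L.map Units.val) (by simpa using hL)
    obtain ⟨B₀, hB₀, rfl⟩ := List.sublist_map_iff.mp hB
    refine ⟨B₀, hB₀, by simpa using hBlen, ?_⟩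
    have h1 : (B₀.map Units.val).prod = (Units.coeHom S) B₀.prod := by
      simpa [show ⇑(Units.coeHom S) = Units.val from rfl] using (List.prod_hom B₀ (Units.coeHom S))
    have h2 : (L.map Units.val).prod = (Units.coeHom S) L.prod := by
      simpa [show ⇑(Units.coeHom S) = Units.val from rfl] using (List.prod_hom L (Units.coeHom S))
    apply Units.ext
    have := hBprod
    rw [h1, h2] at this
    exact this
  · rintro ⟨n, rfl, hn, hall⟩
    exact ⟨n, rfl, hn, fun A hA => all_reducible hus n hall A hA⟩
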